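/- Suppose q = s² and σ is the automorphism σ(a) = a^s of F_q. Let M be an (n+1)×(n+1) invertible matrix over F_q with M^σ = M^{−1} (σ applied entrywise) such that the semilinear map x ↦ M·x^σ fixes no projective point of PG(n,q), i.e. for every nonzero column vector x and every λ ∈ F_q one has M·x^σ ≠ λ·x. Then wt(c_M) = q^{n−1}·(q^{n+1}−1)/(q−1), the maximum possible weight; equivalently, the number of pairs of projective points ([x],[ξ]) with ξ·x = 0 and ξ·M·x^σ = 0 equals (q^{n+1}−1)(q^{n−1}−1)/(q−1)². -/

import Mathlib

open Matrix

/-- `wt σ M` : the Hamming weight of the codeword `c_M` of `C(Λ_σ)`, i.e. the number of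
pairs of projective points `([x],[ξ])` with `ξ·x = 0` and `ξ·M·x^σ ≠ 0`. -/
noncomputable def wt {F : Type} [Field F] [Fintype F] {n : ℕ}
    (σ : F ≃+* F) (M : Matrix (Fin (n + 1)) (Fin (n + 1)) F) : ℕ :=
  Nat.card {pq : Projectivization F (Fin (n + 1) → F) × Projectivization F (Fin (n + 1) → F) //
    pq.2.rep ⬝ᵥ pq.1.rep = 0 ∧ (pq.2.rep ᵥ* M) ⬝ᵥ (fun i => σ (pq.1.rep i)) ≠ 0}

section Aux

variable {F : Type} [Field F] [Fintype F] {m : ℕ}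

set_option linter.unusedSectionVars false

theorem toDual_dot (ξ z : Fin m → F) : (Pi.basisFun F (Fin m)).toDual ξ z = ξ ⬝ᵥ z := by
  have h1 : z = ∑ i, z i • Pi.basisFun F (Fin m) i := by
    ext j; simp [Pi.basisFun_apply, Finset.sum_apply, Pi.single_apply]
  conv_lhs => rw [h1]
  rw [map_sum]
  simp only [_root_.map_smul, Module.Basis.toDual_apply_left, Pi.basisFun_repr, smul_eq_mul]
  simp [dotProduct, mul_comm]

theorem card_dual_ann (W : Submodule F (Fin m → F)) :
    Nat.card {ξ : Fin m → F // ∀ u ∈ W, ξ ⬝ᵥ u = 0}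
      = Fintype.card F ^ (m - Module.finrank F W) := by
  classical
  set e := (Pi.basisFun F (Fin m)).toDualEquiv with he
  have key : ∀ ξ : Fin m → F, (∀ u ∈ W, ξ ⬝ᵥ u = 0) ↔ e ξ ∈ W.dualAnnihilator := by
    intro ξ
    simp only [Submodule.mem_dualAnnihilator, he, Module.Basis.toDualEquiv_apply, toDual_dot]
  have : Finite (Module.Dual F (Fin m → F)) :=
    Finite.of_injective _ DFunLike.coe_injective
  letI : Fintype (Module.Dual F (Fin m → F)) := Fintype.ofFinite _
  letI : Fintype W.dualAnnihilator := Fintype.ofFinite _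
  have E1 : {ξ : Fin m → F // ∀ u ∈ W, ξ ⬝ᵥ u = 0} ≃ W.dualAnnihilator :=
    (Equiv.subtypeEquiv e.toEquiv (fun ξ => by simpa using key ξ))
  rw [Nat.card_congr E1, Nat.card_eq_fintype_card,
    Module.card_eq_pow_finrank (K := F) (V := W.dualAnnihilator)]
  congr 1
  have h2 := Submodule.finrank_quotient_add_finrank W
  have h3 : Module.finrank F W.dualAnnihilator
      = Module.finrank F ((Fin m → F) ⧸ W) := (Subspace.quotEquivAnnihilator W).finrank_eq.symm
  have h4 : Module.finrank F (Fin m → F) = m := Module.finrank_fin_fun F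
  omega

theorem card_dot_pair (x y : Fin m → F) (h : LinearIndependent F ![x, y]) :
    Nat.card {ξ : Fin m → F // ξ ⬝ᵥ x = 0 ∧ ξ ⬝ᵥ y = 0} = Fintype.card F ^ (m - 2) := by
  have hW : ∀ ξ : Fin m → F,
      (ξ ⬝ᵥ x = 0 ∧ ξ ⬝ᵥ y = 0) ↔ ∀ u ∈ Submodule.span F {x, y}, ξ ⬝ᵥ u = 0 := by
    intro ξ
    constructor
    · rintro ⟨h1, h2⟩ u hu
      rcases Submodule.mem_span_pair.mp hu with ⟨a, b, rfl⟩
      simp [dotProduct_add, dotProduct_smul, h1, h2]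
    · intro hh
      exact ⟨hh x (Submodule.subset_span (by simp)), hh y (Submodule.subset_span (by simp))⟩
  rw [Nat.card_congr (Equiv.subtypeEquivRight hW), card_dual_ann]
  congr 2
  have hr : Set.range ![x, y] = {x, y} := by
    ext u
    simp [Matrix.range_cons, Matrix.range_empty]
    tauto
  rw [show ({x, y} : Set (Fin m → F)) = Set.range ![x, y] from hr.symm,
    finrank_span_eq_card h]
  simp

theorem card_dot_single (x : Fin m → F) (hx : x ≠ 0) :
    Nat.card {ξ : Fin m → F // ξ ⬝ᵥ x = 0} = Fintype.card F ^ (m - 1) := by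
  have hW : ∀ ξ : Fin m → F,
      (ξ ⬝ᵥ x = 0) ↔ ∀ u ∈ Submodule.span F {x}, ξ ⬝ᵥ u = 0 := by
    intro ξ
    constructor
    · intro h1 u hu
      rcases Submodule.mem_span_singleton.mp hu with ⟨a, rfl⟩
      simp [dotProduct_smul, h1]
    · intro hh
      exact hh x (Submodule.subset_span (by simp))
  rw [Nat.card_congr (Equiv.subtypeEquivRight hW), card_dual_ann]
  congr 2
  exact finrank_span_singleton hx

theorem card_subtype_and_ne_zero {V : Type} [Fintype V] [AddCommGroup V] (P : V → Prop)
    (h0 : P 0) :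
    Nat.card {w : V // w ≠ 0 ∧ P w} = Nat.card {w : V // P w} - 1 := by
  classical
  rw [Nat.card_eq_fintype_card, Nat.card_eq_fintype_card, Fintype.card_subtype,
    Fintype.card_subtype]
  rw [show (Finset.univ.filter fun w : V => w ≠ 0 ∧ P w)
      = (Finset.univ.filter P).erase 0 from by
    ext w
    simp only [Finset.mem_filter, Finset.mem_erase, Finset.mem_univ, true_and]]
  rw [Finset.card_erase_of_mem (by simp [h0])]

theorem card_subtype_and_not {V : Type} [Fintype V] (A B : V → Prop) :
    Nat.card {w : V // A w ∧ ¬ B w}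
      = Nat.card {w : V // A w} - Nat.card {w : V // A w ∧ B w} := by
  classical
  have h := Finset.card_filter_add_card_filter_not
    (s := Finset.univ.filter A) (p := B)
  rw [Finset.filter_filter, Finset.filter_filter] at h
  rw [Nat.card_eq_fintype_card, Nat.card_eq_fintype_card, Nat.card_eq_fintype_card,
    Fintype.card_subtype, Fintype.card_subtype, Fintype.card_subtype]
  rw [show Finset.univ.filter A = Finset.univ.filter (fun x : V => A x) from rfl] at h
  omega

theorem card_pair_fiber {V : Type} [Fintype V] [AddCommGroup V] (B : V → V → Prop) (c : ℕ)
    (hB : ∀ v, v ≠ 0 → Nat.card {w : V // w ≠ 0 ∧ B v w} = c) :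
    Nat.card {vw : V × V // vw.1 ≠ 0 ∧ vw.2 ≠ 0 ∧ B vw.1 vw.2}
      = (Fintype.card V - 1) * c := by
  classical
  have E : {vw : V × V // vw.1 ≠ 0 ∧ vw.2 ≠ 0 ∧ B vw.1 vw.2}
      ≃ Σ v : V, {w : V // v ≠ 0 ∧ w ≠ 0 ∧ B v w} :=
    Equiv.subtypeProdEquivSigmaSubtype (fun v w => v ≠ 0 ∧ w ≠ 0 ∧ B v w)
  rw [Nat.card_congr E, Nat.card_eq_fintype_card, Fintype.card_sigma]
  rw [← Finset.sum_erase_add Finset.univ _ (Finset.mem_univ (0 : V))]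
  have hzero : Fintype.card {w : V // (0 : V) ≠ 0 ∧ w ≠ 0 ∧ B 0 w} = 0 := by
    exact Fintype.card_eq_zero_iff.mpr ⟨fun w => w.2.1 rfl⟩
  rw [hzero, add_zero]
  rw [Finset.sum_congr rfl (fun v hv => ?_), Finset.sum_const, smul_eq_mul,
    Finset.card_erase_of_mem (Finset.mem_univ 0), Finset.card_univ]
  have hv' : v ≠ 0 := (Finset.mem_erase.mp hv).1
  rw [← Nat.card_eq_fintype_card,
    Nat.card_congr (Equiv.subtypeEquivRight (q := fun w => w ≠ 0 ∧ B v w)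
      (fun w => by tauto)), hB v hv']

theorem card_proj_eq (P : (Fin m → F) → (Fin m → F) → Prop)
    (hP : ∀ (a b : Fˣ) (v w : Fin m → F), v ≠ 0 → w ≠ 0 →
      (P ((a : F) • v) ((b : F) • w) ↔ P v w)) :
    Nat.card {vw : (Fin m → F) × (Fin m → F) // vw.1 ≠ 0 ∧ vw.2 ≠ 0 ∧ P vw.1 vw.2}
      = Nat.card {pq : Projectivization F (Fin m → F) × Projectivization F (Fin m → F) //
          P pq.1.rep pq.2.rep} * (Fintype.card F - 1) ^ 2 := by
  classical
  set T := {pq : Projectivization F (Fin m → F) × Projectivization F (Fin m → F) //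
      P pq.1.rep pq.2.rep}
  let G : T × Fˣ × Fˣ → {vw : (Fin m → F) × (Fin m → F) //
      vw.1 ≠ 0 ∧ vw.2 ≠ 0 ∧ P vw.1 vw.2} := fun z =>
    ⟨(((z.2.1 : F) • z.1.val.1.rep), ((z.2.2 : F) • z.1.val.2.rep)),
      smul_ne_zero (Units.ne_zero z.2.1) z.1.val.1.rep_nonzero,
      smul_ne_zero (Units.ne_zero z.2.2) z.1.val.2.rep_nonzero,
      (hP z.2.1 z.2.2 _ _ z.1.val.1.rep_nonzero z.1.val.2.rep_nonzero).mpr z.1.prop⟩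
  have hGbij : Function.Bijective G := by
    constructor
    · rintro ⟨⟨⟨p, q⟩, hpq⟩, a, b⟩ ⟨⟨⟨p', q'⟩, hpq'⟩, a', b'⟩ hGe
      have h1 : (a : F) • p.rep = (a' : F) • p'.rep := congrArg (fun z => z.val.1) hGe
      have h2 : (b : F) • q.rep = (b' : F) • q'.rep := congrArg (fun z => z.val.2) hGe
      have hpp : p = p' := by
        have e1 : Projectivization.mk F ((a : F) • p.rep)
            (smul_ne_zero (Units.ne_zero a) p.rep_nonzero) = p := by
          conv_rhs => rw [← Projectivization.mk_rep p]
          exact (Projectivization.mk_eq_mk_iff F _ _ _ p.rep_nonzero).mpr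
            ⟨a, by rw [Units.smul_def]⟩
        have e2 : Projectivization.mk F ((a' : F) • p'.rep)
            (smul_ne_zero (Units.ne_zero a') p'.rep_nonzero) = p' := by
          conv_rhs => rw [← Projectivization.mk_rep p']
          exact (Projectivization.mk_eq_mk_iff F _ _ _ p'.rep_nonzero).mpr
            ⟨a', by rw [Units.smul_def]⟩
        rw [← e1, ← e2]
        congr 1
      subst hpp
      have hqq : q = q' := by
        have e1 : Projectivization.mk F ((b : F) • q.rep)
            (smul_ne_zero (Units.ne_zero b) q.rep_nonzero) = q := by
          conv_rhs => rw [← Projectivization.mk_rep q]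
          exact (Projectivization.mk_eq_mk_iff F _ _ _ q.rep_nonzero).mpr
            ⟨b, by rw [Units.smul_def]⟩
        have e2 : Projectivization.mk F ((b' : F) • q'.rep)
            (smul_ne_zero (Units.ne_zero b') q'.rep_nonzero) = q' := by
          conv_rhs => rw [← Projectivization.mk_rep q']
          exact (Projectivization.mk_eq_mk_iff F _ _ _ q'.rep_nonzero).mpr
            ⟨b', by rw [Units.smul_def]⟩
        rw [← e1, ← e2]
        congr 1
      subst hqq
      have ha : a = a' := by
        have hz : ((a : F) - (a' : F)) • p.rep = 0 := by
          rw [sub_smul, h1, sub_self]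
        rcases smul_eq_zero.mp hz with h | h
        · exact Units.ext (sub_eq_zero.mp h)
        · exact absurd h p.rep_nonzero
      have hb : b = b' := by
        have hz : ((b : F) - (b' : F)) • q.rep = 0 := by
          rw [sub_smul, h2, sub_self]
        rcases smul_eq_zero.mp hz with h | h
        · exact Units.ext (sub_eq_zero.mp h)
        · exact absurd h q.rep_nonzero
      simp [ha, hb]
    · rintro ⟨⟨v, w⟩, hv, hw, hvw⟩
      obtain ⟨a, ha⟩ := Projectivization.exists_smul_eq_mk_rep F v hv
      obtain ⟨b, hb⟩ := Projectivization.exists_smul_eq_mk_rep F w hw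
      set p := Projectivization.mk F v hv
      set q := Projectivization.mk F w hw
      have hav : (a : F) • v = p.rep := ha
      have hbw : (b : F) • w = q.rep := hb
      have hP' : P p.rep q.rep := by
        rw [← hav, ← hbw]
        exact (hP a b v w hv hw).mpr hvw
      refine ⟨⟨⟨(p, q), hP'⟩, a⁻¹, b⁻¹⟩, ?_⟩
      apply Subtype.ext
      show (((a⁻¹ : Fˣ) : F) • p.rep, ((b⁻¹ : Fˣ) : F) • q.rep) = (v, w)
      rw [← hav, ← hbw, smul_smul, smul_smul]
      norm_cast
      rw [inv_mul_cancel, inv_mul_cancel]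
      simp
  rw [← Nat.card_congr (Equiv.ofBijective G hGbij)]
  rw [Nat.card_prod, Nat.card_prod, Nat.card_units, Nat.card_eq_fintype_card (α := F)]
  ring

theorem geom_aux (q : ℕ) (hq : 1 ≤ q) (k : ℕ) :
    (q - 1) * (∑ i ∈ Finset.range k, q ^ i) = q ^ k - 1 := by
  induction k with
  | zero => simp
  | succ k ih =>
    rw [Finset.sum_range_succ, Nat.mul_add, ih]
    have h1 : 1 ≤ q ^ k := Nat.one_le_pow _ _ hq
    have h2 : q ^ k ≤ q ^ (k + 1) := Nat.pow_le_pow_right hq (by omega)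
    have h3 : (q - 1) * q ^ k = q ^ (k + 1) - q ^ k := by
      rw [Nat.sub_mul, one_mul, ← pow_succ']
    omega

end Aux
theorem stmt_17 (F : Type) [Field F] [Fintype F] (n : ℕ) (hn : 2 ≤ n)
    (s : ℕ) (hq : Fintype.card F = s ^ 2)
    (σ : F ≃+* F) (hσ : ∀ a : F, σ a = a ^ s)
    (M : Matrix (Fin (n + 1)) (Fin (n + 1)) F) (hM : IsUnit M)
    (hMσ : M.map ⇑σ = M⁻¹)
    (hfpf : ∀ x : Fin (n + 1) → F, x ≠ 0 → ∀ l : F, M *ᵥ (fun i => σ (x i)) ≠ l • x) :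
    wt σ M =
      (Fintype.card F) ^ (n - 1) * (((Fintype.card F) ^ (n + 1) - 1) / ((Fintype.card F) - 1))
    ∧ Nat.card {pq : Projectivization F (Fin (n + 1) → F) × Projectivization F (Fin (n + 1) → F) //
        pq.2.rep ⬝ᵥ pq.1.rep = 0 ∧ (pq.2.rep ᵥ* M) ⬝ᵥ (fun i => σ (pq.1.rep i)) = 0} =
      ((Fintype.card F) ^ (n + 1) - 1) * ((Fintype.card F) ^ (n - 1) - 1)
        / ((Fintype.card F) - 1) ^ 2 := by
  classical
  set q := Fintype.card F with hqdef
  have hq2 : 1 < q := Fintype.one_lt_card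
  set y : (Fin (n + 1) → F) → (Fin (n + 1) → F) := fun v => M *ᵥ (fun i => σ (v i)) with hy
  have hind : ∀ v : Fin (n + 1) → F, v ≠ 0 → LinearIndependent F ![v, y v] := by
    intro v hv
    rw [LinearIndependent.pair_iff' hv]
    intro a hav
    exact hfpf v hv a hav.symm
  have hσne : ∀ a : F, a ≠ 0 → σ a ≠ 0 := by
    intro a ha h
    exact ha (σ.injective (h.trans (map_zero σ).symm))
  have hyunit : ∀ (a : Fˣ) (v : Fin (n + 1) → F), y ((a : F) • v) = σ (a : F) • y v := by
    intro a v
    have h1 : (fun i => σ (((a : F) • v) i)) = σ (a : F) • (fun i => σ (v i)) := by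
      funext i
      simp [_root_.map_mul]
    rw [hy]
    simp only [h1]
    rw [Matrix.mulVec_smul]
  -- the two predicates
  set B0 : (Fin (n + 1) → F) → (Fin (n + 1) → F) → Prop :=
    fun v w => w ⬝ᵥ v = 0 ∧ w ⬝ᵥ y v = 0 with hB0
  set B1 : (Fin (n + 1) → F) → (Fin (n + 1) → F) → Prop :=
    fun v w => w ⬝ᵥ v = 0 ∧ ¬ (w ⬝ᵥ y v = 0) with hB1
  -- fiber counts
  have cardK2 : ∀ v : Fin (n + 1) → F, v ≠ 0 →
      Nat.card {w : Fin (n + 1) → F // w ⬝ᵥ v = 0 ∧ w ⬝ᵥ y v = 0} = q ^ (n - 1) := by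
    intro v hv
    rw [card_dot_pair v (y v) (hind v hv), ← hqdef, show n + 1 - 2 = n - 1 from by omega]
  have cardK1 : ∀ v : Fin (n + 1) → F, v ≠ 0 →
      Nat.card {w : Fin (n + 1) → F // w ⬝ᵥ v = 0} = q ^ n := by
    intro v hv
    rw [card_dot_single v hv, ← hqdef, show n + 1 - 1 = n from by omega]
  have fib0 : ∀ v : Fin (n + 1) → F, v ≠ 0 →
      Nat.card {w : Fin (n + 1) → F // w ≠ 0 ∧ B0 v w} = q ^ (n - 1) - 1 := by
    intro v hv
    rw [card_subtype_and_ne_zero (B0 v) (by simp [hB0]), cardK2 v hv]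
  have fib1 : ∀ v : Fin (n + 1) → F, v ≠ 0 →
      Nat.card {w : Fin (n + 1) → F // w ≠ 0 ∧ B1 v w} = q ^ n - q ^ (n - 1) := by
    intro v hv
    have e : {w : Fin (n + 1) → F // w ≠ 0 ∧ B1 v w}
        ≃ {w : Fin (n + 1) → F // w ⬝ᵥ v = 0 ∧ ¬ (w ⬝ᵥ y v = 0)} :=
      Equiv.subtypeEquivRight (fun w => by
        simp only [hB1]
        constructor
        · tauto
        · intro h
          refine ⟨fun h0 => h.2 ?_, h⟩
          rw [h0]
          simp)
    rw [Nat.card_congr e, card_subtype_and_not (fun w => w ⬝ᵥ v = 0) (fun w => w ⬝ᵥ y v = 0),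
      cardK1 v hv, cardK2 v hv]
  -- scale invariance
  have hscale : ∀ (a b : Fˣ) (v w : Fin (n + 1) → F),
      ((b : F) • w) ⬝ᵥ ((a : F) • v) = (b : F) * ((a : F) * (w ⬝ᵥ v))
      ∧ ((b : F) • w) ⬝ᵥ y ((a : F) • v) = (b : F) * (σ (a : F) * (w ⬝ᵥ y v)) := by
    intro a b v w
    constructor
    · rw [smul_dotProduct, dotProduct_smul]
      simp [mul_comm, mul_left_comm]
    · rw [hyunit a v, smul_dotProduct, dotProduct_smul]
      simp [mul_comm, mul_left_comm]
  have hscale0 : ∀ (a b : Fˣ) (v w : Fin (n + 1) → F), v ≠ 0 → w ≠ 0 →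
      (B0 ((a : F) • v) ((b : F) • w) ↔ B0 v w) := by
    intro a b v w hv hw
    simp only [hB0, (hscale a b v w).1, (hscale a b v w).2, mul_eq_zero]
    have ha := Units.ne_zero a
    have hb := Units.ne_zero b
    have hsa := hσne (a : F) ha
    tauto
  have hscale1 : ∀ (a b : Fˣ) (v w : Fin (n + 1) → F), v ≠ 0 → w ≠ 0 →
      (B1 ((a : F) • v) ((b : F) • w) ↔ B1 v w) := by
    intro a b v w hv hw
    simp only [hB1, (hscale a b v w).1, (hscale a b v w).2, mul_eq_zero]
    have ha := Units.ne_zero a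
    have hb := Units.ne_zero b
    have hsa := hσne (a : F) ha
    tauto
  -- total vector counts
  have hcV : Fintype.card (Fin (n + 1) → F) = q ^ (n + 1) := by
    rw [Fintype.card_fun]
    simp [hqdef]
  have N1 : Nat.card {vw : (Fin (n + 1) → F) × (Fin (n + 1) → F) //
      vw.1 ≠ 0 ∧ vw.2 ≠ 0 ∧ B1 vw.1 vw.2} = (q ^ (n + 1) - 1) * (q ^ n - q ^ (n - 1)) := by
    rw [card_pair_fiber B1 (q ^ n - q ^ (n - 1)) fib1, hcV]
  have N0 : Nat.card {vw : (Fin (n + 1) → F) × (Fin (n + 1) → F) //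
      vw.1 ≠ 0 ∧ vw.2 ≠ 0 ∧ B0 vw.1 vw.2} = (q ^ (n + 1) - 1) * (q ^ (n - 1) - 1) := by
    rw [card_pair_fiber B0 (q ^ (n - 1) - 1) fib0, hcV]
  -- projective counts
  have hwt : wt σ M = Nat.card {pq : Projectivization F (Fin (n + 1) → F) ×
      Projectivization F (Fin (n + 1) → F) // B1 pq.1.rep pq.2.rep} := by
    unfold wt
    refine Nat.card_congr (Equiv.subtypeEquivRight (fun pq => ?_))
    simp only [hB1, hy]
    rw [Matrix.dotProduct_mulVec]
  have hS0 : Nat.card {pq : Projectivization F (Fin (n + 1) → F) ×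
        Projectivization F (Fin (n + 1) → F) //
        pq.2.rep ⬝ᵥ pq.1.rep = 0 ∧ (pq.2.rep ᵥ* M) ⬝ᵥ (fun i => σ (pq.1.rep i)) = 0}
      = Nat.card {pq : Projectivization F (Fin (n + 1) → F) ×
        Projectivization F (Fin (n + 1) → F) // B0 pq.1.rep pq.2.rep} := by
    refine Nat.card_congr (Equiv.subtypeEquivRight (fun pq => ?_))
    simp only [hB0, hy]
    rw [Matrix.dotProduct_mulVec]
  have E1 := card_proj_eq B1 hscale1
  have E0 := card_proj_eq B0 hscale0
  rw [N1, hqdef] at E1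
  rw [N0, hqdef] at E0
  rw [← hqdef] at E1 E0
  -- arithmetic
  set θ1 := ∑ i ∈ Finset.range (n + 1), q ^ i with hθ1
  set θ2 := ∑ i ∈ Finset.range (n - 1), q ^ i with hθ2
  have g1 : (q - 1) * θ1 = q ^ (n + 1) - 1 := geom_aux q (le_of_lt hq2) (n + 1)
  have g2 : (q - 1) * θ2 = q ^ (n - 1) - 1 := geom_aux q (le_of_lt hq2) (n - 1)
  have hpow : q ^ n - q ^ (n - 1) = (q - 1) * q ^ (n - 1) := by
    rw [Nat.sub_mul, one_mul]
    congr 1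
    rw [← pow_succ']
    congr 1
    omega
  have hq1pos : 0 < q - 1 := by omega
  constructor
  · have key : wt σ M * (q - 1) ^ 2 = (q ^ (n - 1) * θ1) * (q - 1) ^ 2 := by
      rw [← hwt] at E1
      rw [← E1, ← g1, hpow]
      ring
    have hwtval : wt σ M = q ^ (n - 1) * θ1 :=
      Nat.eq_of_mul_eq_mul_right (by positivity) key
    rw [hwtval, ← g1, Nat.mul_div_cancel_left θ1 hq1pos]
  · have key : Nat.card {pq : Projectivization F (Fin (n + 1) → F) ×
        Projectivization F (Fin (n + 1) → F) // B0 pq.1.rep pq.2.rep} * (q - 1) ^ 2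
        = (θ1 * θ2) * (q - 1) ^ 2 := by
      rw [← E0, ← g1, ← g2]
      ring
    have hval := Nat.eq_of_mul_eq_mul_right (by positivity) key
    rw [hS0, hval, ← g1, ← g2]
    rw [show (q - 1) * θ1 * ((q - 1) * θ2) = (θ1 * θ2) * (q - 1) ^ 2 by ring,
      Nat.mul_div_cancel _ (by positivity)]
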